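/- arXiv:0908.2272 — 2 statements merged into one kernel-verified Lean document; each statement's English description precedes it below -/
import Mathlib

section
/- Let G be a group acting on the circle S¹ by homeomorphisms in such a way that the induced diagonal action on the space T = {(p,q,r) ∈ S¹×S¹×S¹ : p, q, r pairwise distinct} is properly discontinuous, i.e., for every compact K ⊆ T the set {g ∈ G : g·K ∩ K ≠ ∅} is finite. Let ρ : G → PSL(2,ℂ) be a homomorphism and π : S¹ → ℂP¹ a continuous map which is equivariant: π(g·a) = ρ(g)·π(a) for all g ∈ G and a ∈ S¹. Suppose x ∈ ℂP¹ is such that the preimage π⁻¹(x) is finite and contains at least two points. Then x is not a conical limit point of ρ(G): there is no sequence (g_n) in G with the ρ(g_n) pairwise distinct, together with points x⁺ ≠ x⁻ in ℂP¹, such that ρ(g_n)(x) → x⁺ and the maps ρ(g_n) converge to the constant map with value x⁻ uniformly on compact subsets of ℂP¹ ∖ {x}. -/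
set_option synthInstance.maxHeartbeats 1000000

noncomputable section

/-- `SL(2,ℂ)`. -/
abbrev SL2C := Matrix.SpecialLinearGroup (Fin 2) ℂ

/-- `PSL(2,ℂ) = SL(2,ℂ)/{±I}`, the quotient of `SL(2,ℂ)` by its center. -/
abbrev PSL2C := Matrix.ProjectiveSpecialLinearGroup (Fin 2) ℂ

/-- The complex projective line `ℂP¹`, the projectivization of `ℂ²`. -/
abbrev CP1 := Projectivization ℂ (Fin 2 → ℂ)

instance : TopologicalSpace SL2C := instTopologicalSpaceSubtype
instance : TopologicalSpace CP1 := instTopologicalSpaceQuotient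

theorem projmk_congr {v w : Fin 2 → ℂ} (hv : v ≠ 0) (h : v = w) :
    Projectivization.mk ℂ v hv = Projectivization.mk ℂ w (h ▸ hv) := by subst h; rfl

/-- The action of `SL(2,ℂ)` on `ℂP¹` by Möbius transformations. -/
def sl2smul (g : SL2C) (x : CP1) : CP1 :=
  Projectivization.map (Matrix.SpecialLinearGroup.toLin' g).toLinearMap
    (Matrix.SpecialLinearGroup.toLin' g).injective x

theorem sl2smul_mk (g : SL2C) (v : Fin 2 → ℂ) (hv : v ≠ 0) :
    sl2smul g (Projectivization.mk ℂ v hv) =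
      Projectivization.mk ℂ (Matrix.SpecialLinearGroup.toLin' g v)
        (fun h => hv (by simpa using (Matrix.SpecialLinearGroup.toLin' g).map_eq_zero_iff.mp h)) := by
  simp [sl2smul, Projectivization.map_mk]

instance : MulAction SL2C CP1 where
  smul := sl2smul
  one_smul x := by
    induction x using Projectivization.ind with
    | h v hv => show sl2smul 1 _ = _; rw [sl2smul_mk]; simp
  mul_smul g h x := by
    induction x using Projectivization.ind with
    | h v hv =>
      show sl2smul (g * h) _ = sl2smul g (sl2smul h _)
      rw [sl2smul_mk, sl2smul_mk, sl2smul_mk]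
      exact projmk_congr _ (by simp <;> rfl)

/-- The center of `SL(2,ℂ)` acts trivially on `ℂP¹`. -/
theorem center_sl2smul_eq (A : SL2C) (hA : A ∈ Subgroup.center SL2C) (x : CP1) :
    sl2smul A x = x := by
  obtain ⟨r, hr, hrA⟩ := Matrix.SpecialLinearGroup.mem_center_iff.mp hA
  have hr0 : r ≠ 0 := by
    intro h
    rw [h] at hr
    simp at hr
  induction x using Projectivization.ind with
  | h v hv =>
    rw [sl2smul_mk, Projectivization.mk_eq_mk_iff]
    refine ⟨Units.mk0 r hr0, ?_⟩
    have h1 : Matrix.SpecialLinearGroup.toLin' A v = (A : Matrix (Fin 2) (Fin 2) ℂ).mulVec v := by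
      rw [Matrix.SpecialLinearGroup.toLin'_apply, Matrix.toLin'_apply]
    rw [h1, ← hrA, Matrix.scalar_apply]
    ext i
    rw [Matrix.mulVec_diagonal]
    simp [Units.smul_def]

/-- The action of `PSL(2,ℂ)` on `ℂP¹`, descended from the action of `SL(2,ℂ)`. -/
def psl2Perm : PSL2C →* Equiv.Perm CP1 :=
  QuotientGroup.lift (Subgroup.center SL2C) (MulAction.toPermHom SL2C CP1)
    (fun A hA => Equiv.ext fun x => center_sl2smul_eq A hA x)

instance (priority := 2000) : SMul PSL2C CP1 := ⟨fun g x => psl2Perm g x⟩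

instance (priority := 2000) : MulAction PSL2C CP1 where
  one_smul x := by show psl2Perm 1 x = x; simp
  mul_smul g h x := by
    show psl2Perm (g * h) x = psl2Perm g (psl2Perm h x)
    simp [map_mul]


/-! ### Basic definitions: limit sets, commensurators, parabolicity, lattices -/

open Filter Topology

/-- The sequence `γ` of elements of `PSL(2,ℂ)` converges to the constant map with value `p`
uniformly on compact subsets of `ℂP¹ ∖ {q}`.  (Since `ℂP¹` is a compact Hausdorff space, its
uniform structure is unique, and uniform convergence to a constant `p` on a set `K` is
equivalent to the requirement that for every neighbourhood `U` of `p`, eventually all the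
images of `K` lie in `U`.) -/
def TendstoConstUniformlyAway (γ : ℕ → PSL2C) (q p : CP1) : Prop :=
  ∀ U ∈ 𝓝 p, ∀ K : Set CP1, IsCompact K → q ∉ K →
    ∀ᶠ n in atTop, ∀ x ∈ K, γ n • x ∈ U

/-- The limit set `Λ_Γ ⊆ ℂP¹` of a subgroup `Γ ≤ PSL(2,ℂ)`: the set of points `p` for which
there exist a point `q` and a sequence of pairwise distinct elements of `Γ` converging to the
constant map `p` uniformly on compact subsets of `ℂP¹ ∖ {q}`. -/
def limitSet (Γ : Subgroup PSL2C) : Set CP1 :=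
  {p | ∃ q : CP1, ∃ γ : ℕ → PSL2C, (∀ n, γ n ∈ Γ) ∧ Function.Injective γ ∧
    TendstoConstUniformlyAway γ q p}

/-- `ℝP¹ ⊆ ℂP¹`: the set of points admitting real homogeneous coordinates. -/
def realPoints : Set CP1 :=
  {x | ∃ (w : Fin 2 → ℂ) (hw : w ≠ 0), (∀ i, (w i).im = 0) ∧ x = Projectivization.mk ℂ w hw}

/-- A round circle in `ℂP¹` is a set of the form `g • ℝP¹` with `g ∈ PSL(2,ℂ)`. -/
def IsRoundCircle (C : Set CP1) : Prop :=
  ∃ g : PSL2C, C = (g • ·) '' realPoints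

/-- An element of `PSL(2,ℂ)` is parabolic if it is not the identity and some (equivalently, any)
matrix lift to `SL(2,ℂ)` has trace `±2`. -/
def IsParabolic (g : PSL2C) : Prop :=
  g ≠ 1 ∧ ∃ A : SL2C, (QuotientGroup.mk A : PSL2C) = g ∧
    (Matrix.trace (A : Matrix (Fin 2) (Fin 2) ℂ) = 2 ∨
      Matrix.trace (A : Matrix (Fin 2) (Fin 2) ℂ) = -2)

instance : MeasurableSpace PSL2C := borel _
instance (Δ : Subgroup PSL2C) : MeasurableSpace (PSL2C ⧸ Δ) := borel _

/-- A subgroup `Δ ≤ PSL(2,ℂ)` is a lattice if it is discrete and the quotient `PSL(2,ℂ)/Δ`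
carries a nonzero finite `PSL(2,ℂ)`-invariant Borel measure. -/
def IsLattice (Δ : Subgroup PSL2C) : Prop :=
  DiscreteTopology Δ ∧
  ∃ μ : MeasureTheory.Measure (PSL2C ⧸ Δ), μ ≠ 0 ∧ μ Set.univ < ⊤ ∧
    ∀ g : PSL2C, MeasureTheory.Measure.map (fun y => g • y) μ = μ

/-- A discrete subgroup `Γ ≤ PSL(2,ℂ)` is a fibre group if it is a normal subgroup of some
lattice `Δ ≤ PSL(2,ℂ)` with `Δ/Γ` infinite cyclic or infinite dihedral; equivalently, `Γ` is
the kernel of a surjective homomorphism from a lattice `Δ` onto `ℤ` or onto the infinite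
dihedral group. -/
def IsFibreGroup (Γ : Subgroup PSL2C) : Prop :=
  ∃ Δ : Subgroup PSL2C, IsLattice Δ ∧ Γ ≤ Δ ∧
    ((∃ f : Δ →* Multiplicative ℤ, Function.Surjective f ∧ f.ker = Γ.subgroupOf Δ) ∨
     (∃ f : Δ →* DihedralGroup 0, Function.Surjective f ∧ f.ker = Γ.subgroupOf Δ))



/-! ### Auxiliary lemmas for the main theorem -/

open Complex ComplexConjugate

private lemma nsum_ne_zero {w : Fin 2 → ℂ} (hw : w ≠ 0) :
    ((Complex.normSq (w 0) + Complex.normSq (w 1) : ℝ) : ℂ) ≠ 0 := by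
  have h : 0 < Complex.normSq (w 0) + Complex.normSq (w 1) := by
    rcases Function.ne_iff.mp hw with ⟨i, hi⟩
    fin_cases i
    · exact add_pos_of_pos_of_nonneg (Complex.normSq_pos.mpr hi) (Complex.normSq_nonneg _)
    · exact add_pos_of_nonneg_of_pos (Complex.normSq_nonneg _) (Complex.normSq_pos.mpr hi)
  exact_mod_cast ne_of_gt h

private def pmat (v : { w : Fin 2 → ℂ // w ≠ 0 }) : Fin 2 → Fin 2 → ℂ := fun i j =>
  v.1 i * conj (v.1 j) / ((Complex.normSq (v.1 0) + Complex.normSq (v.1 1) : ℝ) : ℂ)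

private lemma pmat_respects : ∀ (a b : { w : Fin 2 → ℂ // w ≠ 0 }),
    (projectivizationSetoid ℂ (Fin 2 → ℂ)).r a b → pmat a = pmat b := by
  rintro ⟨v, hv⟩ ⟨w, hw⟩ ⟨u, hu⟩
  have hu' : ∀ i, v i = (u : ℂ) * w i := by
    intro i
    have h : (u : ℂ) • w = v := hu
    rw [← h, Pi.smul_apply, smul_eq_mul]
  have hune : (u : ℂ) ≠ 0 := u.ne_zero
  have hNw := nsum_ne_zero hw
  have hNt : ((Complex.normSq (u : ℂ) : ℝ) : ℂ) ≠ 0 := by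
    simp only [ne_eq, Complex.ofReal_eq_zero, Complex.normSq_eq_zero]
    exact hune
  funext i j
  have key : ∀ k l : Fin 2, v k * conj (v l)
      = ((Complex.normSq (u : ℂ) : ℝ) : ℂ) * (w k * conj (w l)) := by
    intro k l
    rw [hu' k, hu' l, map_mul]
    linear_combination (w k * conj (w l)) * Complex.mul_conj (u : ℂ)
  have hden : ((Complex.normSq (v 0) + Complex.normSq (v 1) : ℝ) : ℂ)
      = ((Complex.normSq (u : ℂ) : ℝ) : ℂ)
        * ((Complex.normSq (w 0) + Complex.normSq (w 1) : ℝ) : ℂ) := by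
    rw [hu' 0, hu' 1, Complex.normSq_mul, Complex.normSq_mul]
    push_cast
    ring
  simp only [pmat]
  rw [key i j, hden, mul_div_mul_left _ _ hNt]

private def pmatLift : CP1 → (Fin 2 → Fin 2 → ℂ) :=
  Quotient.lift pmat (fun a b h => pmat_respects a b h)

private lemma pmatLift_continuous : Continuous pmatLift := by
  apply Continuous.quotient_lift
  apply continuous_pi; intro i; apply continuous_pi; intro j
  have hv : Continuous fun v : { w : Fin 2 → ℂ // w ≠ 0 } => v.1 :=
    continuous_subtype_val
  refine Continuous.div ?_ ?_ ?_
  · exact ((continuous_apply i).comp hv).mul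
      (Complex.continuous_conj.comp ((continuous_apply j).comp hv))
  · exact Complex.continuous_ofReal.comp
      ((Complex.continuous_normSq.comp ((continuous_apply 0).comp hv)).add
        (Complex.continuous_normSq.comp ((continuous_apply 1).comp hv)))
  · exact fun v => nsum_ne_zero v.2

private lemma pmatLift_mk (v : Fin 2 → ℂ) (hv : v ≠ 0) :
    pmatLift (Projectivization.mk ℂ v hv) = pmat ⟨v, hv⟩ := rfl

private lemma pmatLift_injective : Function.Injective pmatLift := by
  intro p q
  induction p using Projectivization.ind with
  | h v hv =>
  induction q using Projectivization.ind with
  | h w hw =>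
  intro h
  have h' : pmat ⟨v, hv⟩ = pmat ⟨w, hw⟩ := h
  have hNv := nsum_ne_zero hv
  have hNw := nsum_ne_zero hw
  obtain ⟨j, hj⟩ := Function.ne_iff.mp hv
  have hcvj : conj (v j) ≠ 0 := by simpa using hj
  have hjj := congrFun (congrFun h' j) j
  simp only [pmat] at hjj
  rw [div_eq_div_iff hNv hNw] at hjj
  have hwj : w j ≠ 0 := by
    intro h0
    rw [h0] at hjj
    simp only [map_zero, zero_mul, mul_zero] at hjj
    exact mul_ne_zero (mul_ne_zero hj hcvj) hNw (by linear_combination hjj)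
  have hcwj : conj (w j) ≠ 0 := by simpa using hwj
  set Nv : ℂ := ((Complex.normSq (v 0) + Complex.normSq (v 1) : ℝ) : ℂ) with hNvdef
  set Nw : ℂ := ((Complex.normSq (w 0) + Complex.normSq (w 1) : ℝ) : ℂ) with hNwdef
  set t : ℂ := (conj (w j) * Nv) / (conj (v j) * Nw) with ht
  have htne : t ≠ 0 := div_ne_zero (mul_ne_zero hcwj hNv) (mul_ne_zero hcvj hNw)
  have hvw : ∀ i, t * w i = v i := by
    intro i
    have hij := congrFun (congrFun h' i) j
    simp only [pmat] at hij
    rw [div_eq_div_iff hNv hNw] at hij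
    rw [ht]
    field_simp
    linear_combination hij.symm
  exact ((Projectivization.mk_eq_mk_iff ℂ v w hv hw).mpr
    ⟨Units.mk0 t htne, by funext i; exact hvw i⟩)

instance : T2Space CP1 := by
  constructor
  intro p q hpq
  obtain ⟨U, V, hU, hV, hpU, hqV, hUV⟩ := t2_separation (pmatLift_injective.ne hpq)
  exact ⟨pmatLift ⁻¹' U, pmatLift ⁻¹' V, pmatLift_continuous.isOpen_preimage U hU,
    pmatLift_continuous.isOpen_preimage V hV, hpU, hqV, hUV.preimage _⟩


private lemma unit_re_one {u : ℂ} (h1 : Complex.normSq u = 1) (h2 : u.re = 1) : u = 1 := by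
  have h3 := Complex.normSq_apply u
  have him : u.im = 0 := by nlinarith
  exact Complex.ext (by simp [h2]) (by simp [him])

private lemma chord_cases {a b z : ℂ} (ha : a * conj a = 1) (hb : b * conj b = 1)
    (hz : z * conj z = 1) (hab : a ≠ b) (h : ((z - a) * conj (b - a)).im = 0) :
    z = a ∨ z = b := by
  have hζ : conj ((z - a) * conj (b - a)) = (z - a) * conj (b - a) :=
    Complex.conj_eq_iff_im.mpr h
  have h2 : (conj z - conj a) * (b - a) = (z - a) * (conj b - conj a) := by
    simpa only [map_mul, map_sub, Complex.conj_conj] using hζ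
  have key : (z - a) * (a - b) * (z - b) = 0 := by
    linear_combination (z * a * b) * h2.symm + (z * a ^ 2 - z ^ 2 * a) * hb +
      (z ^ 2 * b - z * b ^ 2) * ha + (a * b ^ 2 - a ^ 2 * b) * hz
  rcases mul_eq_zero.mp key with h' | h'
  · rcases mul_eq_zero.mp h' with h'' | h''
    · exact Or.inl (sub_eq_zero.mp h'')
    · exact absurd (sub_eq_zero.mp h'') hab
  · exact Or.inr (sub_eq_zero.mp h')

private def sepFun (a b z : ℂ) : ℝ := ((z - a) * (starRingEnd ℂ) (b - a)).im

private lemma sepFun_continuous (a b : ℂ) : Continuous fun z : Circle => sepFun a b (z : ℂ) := by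
  apply Complex.continuous_im.comp
  exact (continuous_subtype_val.sub continuous_const).mul continuous_const

private lemma sepFun_self_left (a b : ℂ) : sepFun a b a = 0 := by simp [sepFun]

private lemma sepFun_self_right (a b : ℂ) : sepFun a b b = 0 := by
  simp only [sepFun, map_sub, Complex.mul_im, Complex.sub_re, Complex.sub_im, Complex.conj_re,
    Complex.conj_im]
  ring

private lemma circle_mul_conj (z : Circle) : (z : ℂ) * conj (z : ℂ) = 1 := by
  rw [Complex.mul_conj, Circle.normSq_coe, Complex.ofReal_one]

private lemma sepFun_zero_cases {a b z : Circle} (hab : a ≠ b)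
    (h : sepFun (a : ℂ) (b : ℂ) (z : ℂ) = 0) : z = a ∨ z = b := by
  have hab' : (a : ℂ) ≠ (b : ℂ) := fun hc => hab (Circle.ext hc)
  rcases chord_cases (circle_mul_conj a) (circle_mul_conj b) (circle_mul_conj z) hab' h with
    h' | h'
  · exact Or.inl (Circle.ext h')
  · exact Or.inr (Circle.ext h')

private def ratPt (t : ℝ) : ℂ := ⟨(1 - t ^ 2) / (1 + t ^ 2), 2 * t / (1 + t ^ 2)⟩

private lemma one_add_sq_ne (t : ℝ) : 1 + t ^ 2 ≠ 0 := by positivity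

private lemma ratPt_normSq (t : ℝ) : Complex.normSq (ratPt t) = 1 := by
  have h := one_add_sq_ne t
  simp only [Complex.normSq_apply, ratPt]
  field_simp
  ring

private lemma ratPt_mem (t : ℝ) : ratPt t ∈ Submonoid.unitSphere ℂ := by
  show ratPt t ∈ Metric.sphere (0 : ℂ) 1
  rw [mem_sphere_zero_iff_norm, Complex.norm_def, ratPt_normSq]
  exact Real.sqrt_one

private def circPt (t : ℝ) : Circle := ⟨ratPt t, ratPt_mem t⟩

private lemma ratPt_injective : Function.Injective ratPt := by
  intro s t h
  have hs := one_add_sq_ne s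
  have ht := one_add_sq_ne t
  have hre : (1 - s ^ 2) / (1 + s ^ 2) = (1 - t ^ 2) / (1 + t ^ 2) := congrArg Complex.re h
  have him : 2 * s / (1 + s ^ 2) = 2 * t / (1 + t ^ 2) := congrArg Complex.im h
  rw [div_eq_div_iff hs ht] at hre him
  have h1 : s ^ 2 = t ^ 2 := by nlinarith
  have h2 : (s - t) * (1 + t ^ 2) = 0 := by linear_combination him / 2 + t * h1
  rcases mul_eq_zero.mp h2 with h3 | h3
  · linarith [sub_eq_zero.mp h3]
  · exact absurd h3 ht

private lemma sepFun_circPt (a b : Circle) (t : ℝ) :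
    sepFun (a : ℂ) (b : ℂ) ((a * circPt t : Circle) : ℂ) =
      2 * t / (1 + t ^ 2) *
        (((conj (a : ℂ) * (b : ℂ)).re - 1) + t * (conj (a : ℂ) * (b : ℂ)).im) := by
  have key2 : (((a * circPt t : Circle) : ℂ) - (a : ℂ)) * conj ((b : ℂ) - (a : ℂ))
      = (ratPt t - 1) * (conj (conj (a : ℂ) * (b : ℂ)) - 1) := by
    rw [Circle.coe_mul]
    show ((a : ℂ) * ratPt t - (a : ℂ)) * conj ((b : ℂ) - (a : ℂ)) = _
    simp only [map_sub, map_mul, Complex.conj_conj]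
    linear_combination (1 - ratPt t) * circle_mul_conj a
  unfold sepFun
  rw [key2]
  set u : ℂ := conj (a : ℂ) * (b : ℂ) with hu
  have h1 : (ratPt t - 1).re = -2 * t ^ 2 / (1 + t ^ 2) := by
    simp only [Complex.sub_re, Complex.one_re, ratPt]
    show (1 - t ^ 2) / (1 + t ^ 2) - 1 = _
    field_simp
    ring
  have h2 : (ratPt t - 1).im = 2 * t / (1 + t ^ 2) := by
    simp only [Complex.sub_im, Complex.one_im, ratPt]
    show 2 * t / (1 + t ^ 2) - 0 = _
    ring
  have h3 : (conj u - 1).re = u.re - 1 := by simp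
  have h4 : (conj u - 1).im = -u.im := by simp
  rw [Complex.mul_im, h1, h2, h3, h4]
  have h := one_add_sq_ne t
  field_simp
  ring

private lemma exists_cd (a b : Circle) (hab : a ≠ b) (F : Set Circle) (hF : F.Finite) :
    ∃ c d : Circle, c ∉ F ∧ d ∉ F ∧ 0 < sepFun (a : ℂ) (b : ℂ) (c : ℂ) ∧
      sepFun (a : ℂ) (b : ℂ) (d : ℂ) < 0 := by
  set u : ℂ := conj (a : ℂ) * (b : ℂ) with hu
  have habs : ‖u‖ = 1 := by
    rw [hu, norm_mul, Complex.norm_conj, Circle.norm_coe, Circle.norm_coe, one_mul]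
  have hune : u ≠ 1 := by
    intro h
    apply hab
    apply Circle.ext
    have h2 : (a : ℂ) * (conj (a : ℂ) * (b : ℂ)) = (a : ℂ) * 1 := by rw [← hu, h]
    have h3 : (b : ℂ) = (a : ℂ) := by
      calc (b : ℂ) = ((a : ℂ) * conj (a : ℂ)) * (b : ℂ) := by rw [circle_mul_conj]; ring
        _ = (a : ℂ) * (conj (a : ℂ) * (b : ℂ)) := by ring
        _ = (a : ℂ) := by rw [h2, mul_one]
    exact h3.symm
  have hre1 : u.re < 1 := by
    refine lt_of_le_of_ne (le_trans (Complex.re_le_norm u) (le_of_eq habs)) ?_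
    intro h
    exact hune (unit_re_one (by rw [Complex.normSq_eq_norm_sq, habs]; norm_num) h)
  set T : ℝ := (1 - u.re) / (|u.im| + 1) with hT
  have hT0 : 0 < T := div_pos (by linarith) (by positivity)
  have hmapinj : Function.Injective (fun t : ℝ => a * circPt t) := by
    intro s t h
    have h2 : circPt s = circPt t := mul_left_cancel h
    exact ratPt_injective (congrArg Subtype.val h2)
  have himneg : ((fun t : ℝ => a * circPt t) '' Set.Ioo 0 T).Infinite :=
    (Set.Ioo_infinite hT0).image (Function.Injective.injOn hmapinj)
  have himpos : ((fun t : ℝ => a * circPt t) '' Set.Ioo (-T) 0).Infinite :=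
    (Set.Ioo_infinite (by linarith)).image (Function.Injective.injOn hmapinj)
  obtain ⟨d, hdS, hdF⟩ := (himneg.diff hF).nonempty
  obtain ⟨c, hcS, hcF⟩ := (himpos.diff hF).nonempty
  obtain ⟨td, htd, rfl⟩ := hdS
  obtain ⟨tc, htc, rfl⟩ := hcS
  refine ⟨_, _, hcF, hdF, ?_, ?_⟩
  · rw [sepFun_circPt, ← hu]
    have h5 : tc * u.im ≤ -tc * |u.im| := by
      have h5a : tc * u.im ≤ |tc * u.im| := le_abs_self _
      rwa [abs_mul, abs_of_neg htc.2] at h5a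
    have h6 : -tc * (|u.im| + 1) < 1 - u.re := by
      have h7 : -tc < T := by linarith [htc.1]
      calc -tc * (|u.im| + 1) < T * (|u.im| + 1) := by
            apply mul_lt_mul_of_pos_right h7 (by positivity)
        _ = 1 - u.re := by rw [hT]; field_simp
    have h8 : -tc * |u.im| = -tc * (|u.im| + 1) + tc := by ring
    have hfac : (u.re - 1) + tc * u.im < 0 := by linarith [htc.2]
    have hfac2 : 2 * tc / (1 + tc ^ 2) < 0 := by
      apply div_neg_of_neg_of_pos (by linarith [htc.2]) (by positivity)
    exact mul_pos_of_neg_of_neg hfac2 hfac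
  · rw [sepFun_circPt, ← hu]
    have h5 : td * u.im ≤ td * |u.im| :=
      mul_le_mul_of_nonneg_left (le_abs_self _) (le_of_lt htd.1)
    have h6 : td * (|u.im| + 1) < 1 - u.re := by
      calc td * (|u.im| + 1) < T * (|u.im| + 1) := by
            apply mul_lt_mul_of_pos_right htd.2 (by positivity)
        _ = 1 - u.re := by rw [hT]; field_simp
    have h8 : td * |u.im| = td * (|u.im| + 1) - td := by ring
    have hfac : (u.re - 1) + td * u.im < 0 := by linarith [htd.1]
    have hfac2 : 0 < 2 * td / (1 + td ^ 2) := by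
      apply div_pos (by linarith [htd.1]) (by positivity)
    exact mul_neg_of_pos_of_neg hfac2 hfac

private lemma not_in_component {a b c d : Circle} (hab : a ≠ b)
    (hc : 0 < sepFun (a : ℂ) (b : ℂ) (c : ℂ)) (hd : sepFun (a : ℂ) (b : ℂ) (d : ℂ) < 0) :
    d ∉ connectedComponentIn ({a, b}ᶜ : Set Circle) c := by
  intro hmem
  have hcmem : c ∈ ({a, b}ᶜ : Set Circle) := by
    simp only [Set.mem_compl_iff, Set.mem_insert_iff, Set.mem_singleton_iff]
    rintro (rfl | rfl)
    · exact absurd (sepFun_self_left _ _) (ne_of_gt hc)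
    · exact absurd (sepFun_self_right _ _) (ne_of_gt hc)
  have hΓconn : IsPreconnected (connectedComponentIn ({a, b}ᶜ : Set Circle) c) :=
    isPreconnected_connectedComponentIn
  have hcΓ : c ∈ connectedComponentIn ({a, b}ᶜ : Set Circle) c := mem_connectedComponentIn hcmem
  have hcont : ContinuousOn (fun z : Circle => sepFun (a : ℂ) (b : ℂ) (z : ℂ))
      (connectedComponentIn ({a, b}ᶜ : Set Circle) c) :=
    (sepFun_continuous _ _).continuousOn
  have hIcc := hΓconn.intermediate_value hmem hcΓ hcont
  obtain ⟨z, hzΓ, hz0⟩ := hIcc ⟨le_of_lt hd, le_of_lt hc⟩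
  rcases sepFun_zero_cases hab hz0 with rfl | rfl
  · exact (connectedComponentIn_subset _ _ hzΓ) (by simp)
  · exact (connectedComponentIn_subset _ _ hzΓ) (by simp)

private lemma smul_not_in_component {G : Type} [Group G] [MulAction G Circle]
    (hcont : ∀ g : G, Continuous (fun z : Circle => g • z)) (g : G) {a b c d : Circle}
    (h : d ∉ connectedComponentIn ({a, b}ᶜ : Set Circle) c) :
    g • d ∉ connectedComponentIn ({g • a, g • b}ᶜ : Set Circle) (g • c) := by
  intro hmem
  apply h
  have hgc : g • c ∈ ({g • a, g • b}ᶜ : Set Circle) :=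
    connectedComponentIn_nonempty_iff.mp ⟨_, hmem⟩
  have himg := (hcont g⁻¹).image_connectedComponentIn_subset hgc
  have hset : (fun z : Circle => g⁻¹ • z) '' ({g • a, g • b}ᶜ : Set Circle)
      = ({a, b}ᶜ : Set Circle) := by
    rw [Set.image_compl_eq (MulAction.bijective g⁻¹), Set.image_pair]
    simp [inv_smul_smul]
  have hd : d ∈ (fun z : Circle => g⁻¹ • z) ''
      connectedComponentIn ({g • a, g • b}ᶜ : Set Circle) (g • c) :=
    ⟨g • d, hmem, inv_smul_smul g d⟩
  have h2 := himg hd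
  rwa [hset, inv_smul_smul] at h2

private lemma cap_isPreconnected (e : Circle) {r : ℝ} (h0 : 0 ≤ r) (h1 : r < 1) :
    IsPreconnected {z : Circle | r < ((z : ℂ) * conj (e : ℂ)).re} := by
  set W := {z : Circle | r < ((z : ℂ) * conj (e : ℂ)).re} with hW
  have heW : e ∈ W := by
    simp only [hW, Set.mem_setOf_eq, circle_mul_conj, Complex.one_re]
    exact h1
  have hpath : IsPathConnected W := by
    refine ⟨e, heW, ?_⟩
    intro z hz
    set R : ℝ := ((z : ℂ) * conj (e : ℂ)).re with hR
    have hRr : r < R := hz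
    set A : ℝ → ℂ := fun s => ((1 - s : ℝ) : ℂ) * (e : ℂ) + ((s : ℝ) : ℂ) * (z : ℂ) with hA
    have hAre : ∀ s : ℝ, 0 ≤ s → s ≤ 1 → r < (A s * conj (e : ℂ)).re := by
      intro s hs0 hs1
      have hsplit : A s * conj (e : ℂ)
          = ((1 - s : ℝ) : ℂ) * ((e : ℂ) * conj (e : ℂ))
            + ((s : ℝ) : ℂ) * ((z : ℂ) * conj (e : ℂ)) := by
        rw [hA]; ring
      have hexp : (A s * conj (e : ℂ)).re = (1 - s) * 1 + s * R := by
        rw [hsplit, circle_mul_conj]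
        rw [Complex.add_re, Complex.mul_re, Complex.mul_re]
        simp [hR]
      rw [hexp]
      rcases eq_or_lt_of_le hs1 with rfl | hs1'
      · simpa using hRr
      · nlinarith
    have hAabs : ∀ s : ℝ, 0 ≤ s → s ≤ 1 → ‖A s‖ ≤ 1 := by
      intro s hs0 hs1
      calc ‖A s‖ ≤ ‖((1 - s : ℝ) : ℂ) * (e : ℂ)‖
            + ‖((s : ℝ) : ℂ) * (z : ℂ)‖ := norm_add_le _ _
        _ = |1 - s| * 1 + |s| * 1 := by
            rw [norm_mul, norm_mul, Complex.norm_real, Complex.norm_real, Real.norm_eq_abs,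
              Real.norm_eq_abs, Circle.norm_coe, Circle.norm_coe]
        _ = 1 := by rw [_root_.abs_of_nonneg (by linarith : (0:ℝ) ≤ 1 - s), _root_.abs_of_nonneg hs0]; ring
    have hApos : ∀ s : ℝ, 0 ≤ s → s ≤ 1 → 0 < ‖A s‖ := by
      intro s hs0 hs1
      rcases eq_or_ne (A s) 0 with hA0 | hA0
      · exfalso
        have h' := hAre s hs0 hs1
        rw [hA0] at h'
        simp only [zero_mul, Complex.zero_re] at h'
        linarith
      · exact norm_pos_iff.mpr hA0
    have hmemball : ∀ s : unitInterval,
        A s / ((‖A s‖ : ℝ) : ℂ) ∈ Submonoid.unitSphere ℂ := by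
      intro s
      have hpos := hApos s s.2.1 s.2.2
      show _ ∈ Metric.sphere (0 : ℂ) 1
      rw [mem_sphere_zero_iff_norm, norm_div, Complex.norm_real, Real.norm_eq_abs,
        abs_of_pos hpos, div_self (ne_of_gt hpos)]
    set P : unitInterval → Circle := fun s => ⟨A s / ((‖A s‖ : ℝ) : ℂ), hmemball s⟩
      with hP
    have hPcont : Continuous P := by
      apply Continuous.subtype_mk
      have hAc : Continuous fun s : unitInterval => A (s : ℝ) := by
        apply Continuous.add
        · exact (Complex.continuous_ofReal.comp
            (continuous_const.sub continuous_subtype_val)).mul continuous_const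
        · exact (Complex.continuous_ofReal.comp continuous_subtype_val).mul continuous_const
      refine hAc.div (Complex.continuous_ofReal.comp (continuous_norm.comp hAc)) ?_
      intro s
      exact_mod_cast ne_of_gt (hApos s s.2.1 s.2.2)
    have hP0 : P 0 = e := by
      apply Circle.ext
      show A 0 / ((‖A 0‖ : ℝ) : ℂ) = (e : ℂ)
      have hA0 : A 0 = (e : ℂ) := by rw [hA]; simp
      rw [hA0, Circle.norm_coe]
      simp
    have hP1 : P 1 = z := by
      apply Circle.ext
      show A 1 / ((‖A 1‖ : ℝ) : ℂ) = (z : ℂ)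
      have hA1 : A 1 = (z : ℂ) := by rw [hA]; simp
      rw [hA1, Circle.norm_coe]
      simp
    refine ⟨⟨⟨P, hPcont⟩, hP0, hP1⟩, ?_⟩
    intro s
    show P s ∈ W
    simp only [hW, Set.mem_setOf_eq, hP]
    have hpos := hApos s s.2.1 s.2.2
    have hre : ((A s / ((‖A s‖ : ℝ) : ℂ)) * conj (e : ℂ)).re
        = (A s * conj (e : ℂ)).re / ‖A s‖ := by
      rw [div_mul_eq_mul_div, Complex.div_ofReal_re]
    show r < ((A s / ((‖A s‖ : ℝ) : ℂ)) * conj (e : ℂ)).re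
    rw [hre]
    have h1' := hAre s s.2.1 s.2.2
    have h2' := hAabs s s.2.1 s.2.2
    have hnum : 0 < (A s * conj (e : ℂ)).re := lt_of_le_of_lt h0 h1'
    calc r < (A s * conj (e : ℂ)).re := h1'
      _ ≤ (A s * conj (e : ℂ)).re / ‖A s‖ := by
          rw [le_div_iff₀ hpos]
          nlinarith
  exact hpath.isConnected.isPreconnected


/-- **Exceptional points are not conical.**  Let `G` act on the circle `S¹` by homeomorphisms
so that the diagonal action on the space of distinct triples is properly discontinuous, let
`ρ : G → PSL(2,ℂ)` be a homomorphism and `π : S¹ → ℂP¹` a continuous `ρ`-equivariant map.  If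
`x ∈ ℂP¹` has finite preimage under `π` containing at least two points, then `x` is not a
conical limit point of `ρ(G)`. -/
theorem not_conicalLimitPoint_of_multiple_preimages
    (G : Type) [Group G] [MulAction G Circle]
    (hcont : ∀ g : G, Continuous (fun a : Circle => g • a))
    (hpd : ∀ K : Set (Circle × Circle × Circle), IsCompact K →
      K ⊆ {t : Circle × Circle × Circle | t.1 ≠ t.2.1 ∧ t.1 ≠ t.2.2 ∧ t.2.1 ≠ t.2.2} →
      {g : G | ((g • ·) '' K ∩ K).Nonempty}.Finite)
    (ρ : G →* PSL2C) (π : Circle → CP1) (hπ : Continuous π)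
    (heqv : ∀ (g : G) (a : Circle), π (g • a) = ρ g • π a)
    (x : CP1) (hfin : (π ⁻¹' {x}).Finite)
    (h2 : ∃ a b : Circle, π a = x ∧ π b = x ∧ a ≠ b) :
    ¬ ∃ (gs : ℕ → G) (xp xm : CP1), Function.Injective (fun n => ρ (gs n)) ∧ xp ≠ xm ∧
        Filter.Tendsto (fun n => ρ (gs n) • x) Filter.atTop (nhds xp) ∧
        TendstoConstUniformlyAway (fun n => ρ (gs n)) x xm := by
  rintro ⟨gs, xp, xm, hinj, hpm, hto, hunif⟩
  obtain ⟨a, b, hπa, hπb, hab⟩ := h2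
  obtain ⟨c, d, hcF, hdF, hfc, hfd⟩ := exists_cd a b hab _ hfin
  have haF : a ∈ π ⁻¹' {x} := by simp [Set.mem_preimage, hπa]
  have hπc : π c ≠ x := fun h => hcF (by simp [Set.mem_preimage, h])
  have hπd : π d ≠ x := fun h => hdF (by simp [Set.mem_preimage, h])
  have tend_away : ∀ y : CP1, y ≠ x →
      Tendsto (fun n => ρ (gs n) • y) atTop (𝓝 xm) := by
    intro y hy
    rw [Filter.tendsto_def]
    intro s hs
    have hev := hunif s hs {y} isCompact_singleton
      (fun hmem => hy (Set.mem_singleton_iff.mp hmem).symm)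
    exact hev.mono fun n h => h y rfl
  obtain ⟨⟨⟨a', b'⟩, c', d'⟩, φ, hφ, hL⟩ := CompactSpace.tendsto_subseq
    (fun n => ((gs n • a, gs n • b), (gs n • c, gs n • d)))
  have hta : Tendsto (fun n => gs (φ n) • a) atTop (𝓝 a') :=
    ((continuous_fst.comp continuous_fst).tendsto _).comp hL
  have htb : Tendsto (fun n => gs (φ n) • b) atTop (𝓝 b') :=
    ((continuous_snd.comp continuous_fst).tendsto _).comp hL
  have htc : Tendsto (fun n => gs (φ n) • c) atTop (𝓝 c') :=
    ((continuous_fst.comp continuous_snd).tendsto _).comp hL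
  have htd : Tendsto (fun n => gs (φ n) • d) atTop (𝓝 d') :=
    ((continuous_snd.comp continuous_snd).tendsto _).comp hL
  have hπsur : ∀ (y y' : Circle) (q : CP1), Tendsto (fun n => gs (φ n) • y) atTop (𝓝 y') →
      Tendsto (fun n => ρ (gs n) • π y) atTop (𝓝 q) → π y' = q := by
    intro y y' q h1 h2'
    have h3 : Tendsto (fun n => π (gs (φ n) • y)) atTop (𝓝 (π y')) := (hπ.tendsto y').comp h1
    have h5 : Tendsto (fun n => ρ (gs (φ n)) • π y) atTop (𝓝 q) := h2'.comp (hφ.tendsto_atTop)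
    have h4 : Tendsto (fun n => π (gs (φ n) • y)) atTop (𝓝 q) :=
      h5.congr (fun n => (heqv _ _).symm)
    exact tendsto_nhds_unique h3 h4
  have hπa' : π a' = xp := hπsur a a' xp hta (by rw [hπa]; exact hto)
  have hπb' : π b' = xp := hπsur b b' xp htb (by rw [hπb]; exact hto)
  have hπc' : π c' = xm := hπsur c c' xm htc (tend_away (π c) hπc)
  have hπd' : π d' = xm := hπsur d d' xm htd (tend_away (π d) hπd)
  have hac : a' ≠ c' := fun h => hpm (by rw [← hπa', h, hπc'])
  have had : a' ≠ d' := fun h => hpm (by rw [← hπa', h, hπd'])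
  have hbc : b' ≠ c' := fun h => hpm (by rw [← hπb', h, hπc'])
  by_cases hcd : c' = d'
  · -- the two "middle" limits coincide: contradiction with circle separation
    rw [← hcd] at htd
    have hnotin : ∀ n : ℕ, gs n • d ∉
        connectedComponentIn ({gs n • a, gs n • b}ᶜ : Set Circle) (gs n • c) :=
      fun n => smul_not_in_component hcont (gs n) (not_in_component hab hfc hfd)
    have hone : ∀ w : Circle, w ≠ c' → ((w : ℂ) * conj ((c' : Circle) : ℂ)).re < 1 := by
      intro w hw
      have habs1 : ‖(w : ℂ) * conj ((c' : Circle) : ℂ)‖ = 1 := by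
        rw [norm_mul, Complex.norm_conj, Circle.norm_coe, Circle.norm_coe, one_mul]
      refine lt_of_le_of_ne (le_trans (Complex.re_le_norm _) (le_of_eq habs1)) ?_
      intro h
      apply hw
      apply Circle.ext
      have huone : (w : ℂ) * conj ((c' : Circle) : ℂ) = 1 :=
        unit_re_one (by rw [Complex.normSq_eq_norm_sq, habs1]; norm_num) h
      calc (w : ℂ) = (w : ℂ) * (((c' : Circle) : ℂ) * conj ((c' : Circle) : ℂ)) := by
            rw [circle_mul_conj]; ring
        _ = ((w : ℂ) * conj ((c' : Circle) : ℂ)) * ((c' : Circle) : ℂ) := by ring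
        _ = ((c' : Circle) : ℂ) := by rw [huone, one_mul]
    set Ra : ℝ := ((a' : ℂ) * conj ((c' : Circle) : ℂ)).re with hRadef
    set Rb : ℝ := ((b' : ℂ) * conj ((c' : Circle) : ℂ)).re with hRbdef
    have hRa : Ra < 1 := hone a' hac
    have hRb : Rb < 1 := hone b' hbc
    set r : ℝ := (max (max Ra Rb) 0 + 1) / 2 with hrdef
    have hm0 : (0 : ℝ) ≤ max (max Ra Rb) 0 := le_max_right _ _
    have hm1 : max (max Ra Rb) 0 < 1 := max_lt (max_lt hRa hRb) one_pos
    have h0r : 0 ≤ r := by rw [hrdef]; linarith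
    have hr1 : r < 1 := by rw [hrdef]; linarith
    have hRar : Ra < r := by
      have := le_max_left Ra Rb
      have := le_max_left (max Ra Rb) (0 : ℝ)
      rw [hrdef]; linarith
    have hRbr : Rb < r := by
      have := le_max_right Ra Rb
      have := le_max_left (max Ra Rb) (0 : ℝ)
      rw [hrdef]; linarith
    set W : Set Circle := {z : Circle | r < ((z : ℂ) * conj ((c' : Circle) : ℂ)).re} with hWdef
    have hWpre : IsPreconnected W := cap_isPreconnected c' h0r hr1
    have hcontre : Continuous fun z : Circle => ((z : ℂ) * conj ((c' : Circle) : ℂ)).re :=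
      Complex.continuous_re.comp (continuous_subtype_val.mul continuous_const)
    have hWopen : IsOpen W := isOpen_lt continuous_const hcontre
    have hW'open : IsOpen {z : Circle | ((z : ℂ) * conj ((c' : Circle) : ℂ)).re < r} :=
      isOpen_lt hcontre continuous_const
    have hc'W : c' ∈ W := by
      simp only [hWdef, Set.mem_setOf_eq, circle_mul_conj, Complex.one_re]
      exact hr1
    have evc : ∀ᶠ n in atTop, gs (φ n) • c ∈ W := htc.eventually (hWopen.eventually_mem hc'W)
    have evd : ∀ᶠ n in atTop, gs (φ n) • d ∈ W := htd.eventually (hWopen.eventually_mem hc'W)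
    have eva : ∀ᶠ n in atTop,
        gs (φ n) • a ∈ {z : Circle | ((z : ℂ) * conj ((c' : Circle) : ℂ)).re < r} :=
      hta.eventually (hW'open.eventually_mem hRar)
    have evb : ∀ᶠ n in atTop,
        gs (φ n) • b ∈ {z : Circle | ((z : ℂ) * conj ((c' : Circle) : ℂ)).re < r} :=
      htb.eventually (hW'open.eventually_mem hRbr)
    obtain ⟨n, h1, h2', h3, h4⟩ := (eva.and (evb.and (evc.and evd))).exists
    apply hnotin (φ n)
    have hsub : W ⊆ ({gs (φ n) • a, gs (φ n) • b}ᶜ : Set Circle) := by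
      intro w hwW
      simp only [Set.mem_compl_iff, Set.mem_insert_iff, Set.mem_singleton_iff]
      push_neg
      constructor
      · intro heq
        rw [heq] at hwW
        have := h1
        simp only [hWdef, Set.mem_setOf_eq] at this hwW
        linarith
      · intro heq
        rw [heq] at hwW
        have := h2'
        simp only [hWdef, Set.mem_setOf_eq] at this hwW
        linarith
    exact hWpre.subset_connectedComponentIn h3 hsub h4
  · -- distinct limits: contradiction with proper discontinuity
    have hTopen : IsOpen {t : Circle × Circle × Circle |
        t.1 ≠ t.2.1 ∧ t.1 ≠ t.2.2 ∧ t.2.1 ≠ t.2.2} := by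
      refine IsOpen.inter ?_ (IsOpen.inter ?_ ?_)
      · exact isOpen_ne_fun continuous_fst (continuous_fst.comp continuous_snd)
      · exact isOpen_ne_fun continuous_fst ((continuous_snd.comp continuous_snd))
      · exact isOpen_ne_fun (continuous_fst.comp continuous_snd)
          (continuous_snd.comp continuous_snd)
    have htrip : ((a', c', d') : Circle × Circle × Circle) ∈ {t : Circle × Circle × Circle |
        t.1 ≠ t.2.1 ∧ t.1 ≠ t.2.2 ∧ t.2.1 ≠ t.2.2} := ⟨hac, had, hcd⟩
    obtain ⟨K₀, hK₀n, hK₀cl, hK₀T⟩ := exists_mem_nhds_isClosed_subset (hTopen.mem_nhds htrip)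
    have hK₀cpt : IsCompact K₀ := hK₀cl.isCompact
    have hv : Tendsto (fun n => (gs (φ n) • a, gs (φ n) • c, gs (φ n) • d)) atTop
        (𝓝 (a', c', d')) := hta.prodMk_nhds (htc.prodMk_nhds htd)
    have hev : ∀ᶠ n in atTop, (gs (φ n) • a, gs (φ n) • c, gs (φ n) • d) ∈ K₀ := hv hK₀n
    obtain ⟨N, hN⟩ := Filter.eventually_atTop.mp hev
    have hca : c ≠ a := fun h => hcF (h ▸ haF)
    have hda : d ≠ a := fun h => hdF (h ▸ haF)
    have hcdne : c ≠ d := by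
      intro h
      rw [h] at hfc
      linarith
    have hacd : ((a, c, d) : Circle × Circle × Circle) ∈ {t : Circle × Circle × Circle |
        t.1 ≠ t.2.1 ∧ t.1 ≠ t.2.2 ∧ t.2.1 ≠ t.2.2} := ⟨hca.symm, hda.symm, hcdne⟩
    set K : Set (Circle × Circle × Circle) := insert (a, c, d) K₀ with hKdef
    have hKcpt : IsCompact K := hK₀cpt.insert _
    have hKT : K ⊆ {t : Circle × Circle × Circle |
        t.1 ≠ t.2.1 ∧ t.1 ≠ t.2.2 ∧ t.2.1 ≠ t.2.2} :=
      Set.insert_subset_iff.mpr ⟨hacd, hK₀T⟩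
    have hfinG := hpd K hKcpt hKT
    have hinj2 : Function.Injective (fun m : ℕ => gs (φ (N + m))) := by
      intro m k h
      have h2' : ρ (gs (φ (N + m))) = ρ (gs (φ (N + k))) := congrArg ρ h
      have h3' : φ (N + m) = φ (N + k) := hinj h2'
      exact Nat.add_left_cancel (hφ.injective h3')
    have hmem2 : ∀ m : ℕ, gs (φ (N + m)) ∈ {g : G | ((g • ·) '' K ∩ K).Nonempty} := by
      intro m
      refine ⟨gs (φ (N + m)) • ((a, c, d) : Circle × Circle × Circle), ?_, ?_⟩
      · exact Set.mem_image_of_mem _ (Set.mem_insert _ _)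
      · have hsmul : gs (φ (N + m)) • ((a, c, d) : Circle × Circle × Circle)
            = (gs (φ (N + m)) • a, gs (φ (N + m)) • c, gs (φ (N + m)) • d) := rfl
        rw [hKdef, hsmul]
        exact Set.mem_insert_of_mem _ (hN (N + m) (Nat.le_add_right N m))
    exact Set.infinite_of_injective_forall_mem hinj2 hmem2 hfinG
end
end

section
/- Let Γ ≤ PSL(2,ℂ) be a discrete subgroup and let x ∈ ℂP¹. The following are equivalent: (a) there exist a sequence (γ_m) in Γ and points x⁺ ≠ x⁻ in ℂP¹ such that γ_m(x) → x⁺ and the γ_m converge to the constant map with value x⁻ uniformly on compact subsets of ℂP¹ ∖ {x}; (b) there exists a sequence (γ_n) of pairwise distinct elements of Γ such that for every y ∈ ℂP¹ with y ≠ x, the closure of the set {(γ_n(x), γ_n(y)) : n ∈ ℕ} in ℂP¹ × ℂP¹ is disjoint from the diagonal (equivalently, inf_n d(γ_n(x), γ_n(y)) > 0 for any metric d inducing the topology of ℂP¹). Either condition characterizes x being a conical limit point of Γ. -/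
set_option synthInstance.maxHeartbeats 1000000

noncomputable section

/-! ### Basic definitions: limit sets, commensurators, parabolicity, lattices -/

open Filter Topology

open Filter Topology

abbrev V2 := Fin 2 → ℂ

lemma ne_zero_iff_coord (w : V2) : w ≠ 0 ↔ w 0 ≠ 0 ∨ w 1 ≠ 0 := by
  constructor
  · intro h
    by_contra hc
    push_neg at hc
    exact h (funext fun i => by fin_cases i <;> simp [hc.1, hc.2])
  · rintro (h | h) rfl <;> simp at h

lemma mk_eq_iff_cross {v w : V2} (hv : v ≠ 0) (hw : w ≠ 0) :
    Projectivization.mk ℂ v hv = Projectivization.mk ℂ w hw ↔ v 0 * w 1 - v 1 * w 0 = 0 := by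
  rw [Projectivization.mk_eq_mk_iff]
  constructor
  · rintro ⟨a, rfl⟩
    simp [Pi.smul_apply, Units.smul_def, smul_eq_mul]
    ring
  · intro h
    rcases (ne_zero_iff_coord w).mp hw with h0 | h1
    · have hv0 : v 0 ≠ 0 := by
        intro hz
        have hv1 : v 1 = 0 := by
          have : v 1 * w 0 = 0 := by linear_combination -h + w 1 * hz
          exact (mul_eq_zero.mp this).resolve_right h0
        exact hv (funext fun i => by fin_cases i <;> simp [hz, hv1])
      refine ⟨Units.mk0 (v 0 / w 0) (div_ne_zero hv0 h0), funext fun i => ?_⟩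
      fin_cases i <;> simp [Units.smul_def, smul_eq_mul]
      · field_simp
      · field_simp
        linear_combination h
    · have hv1 : v 1 ≠ 0 := by
        intro hz
        have hv0 : v 0 = 0 := by
          have : v 0 * w 1 = 0 := by linear_combination h + w 0 * hz
          exact (mul_eq_zero.mp this).resolve_right h1
        exact hv (funext fun i => by fin_cases i <;> simp [hz, hv0])
      refine ⟨Units.mk0 (v 1 / w 1) (div_ne_zero hv1 h1), funext fun i => ?_⟩
      fin_cases i <;> simp [Units.smul_def, smul_eq_mul]
      · field_simp
        linear_combination -h
      · field_simp
lemma mk'_eq_mk (u : {v : V2 // v ≠ 0}) :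
    Projectivization.mk' ℂ u = Projectivization.mk ℂ u.1 u.2 := rfl

lemma continuous_mk' : Continuous (Projectivization.mk' ℂ : {v : V2 // v ≠ 0} → CP1) :=
  continuous_quotient_mk'

lemma mk_smul {c : ℂ} (hc : c ≠ 0) (v : V2) (hv : v ≠ 0) (h : c • v ≠ 0) :
    Projectivization.mk ℂ (c • v) h = Projectivization.mk ℂ v hv :=
  (Projectivization.mk_eq_mk_iff ℂ _ _ _ _).mpr ⟨Units.mk0 c hc, rfl⟩

lemma isOpenMap_mk' : IsOpenMap (Projectivization.mk' ℂ : {v : V2 // v ≠ 0} → CP1) := by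
  intro U hU
  have : IsOpen ((Projectivization.mk' ℂ) ⁻¹' ((Projectivization.mk' ℂ) '' U)) := by
    have : (Projectivization.mk' ℂ) ⁻¹' ((Projectivization.mk' ℂ) '' U) =
        ⋃ c : ℂˣ, (fun w : {v : V2 // v ≠ 0} =>
          (⟨(c : ℂ) • w.1, smul_ne_zero c.ne_zero w.2⟩ : {v : V2 // v ≠ 0})) ⁻¹' U := by
      ext w
      simp only [Set.mem_preimage, Set.mem_image, Set.mem_iUnion]
      constructor
      · rintro ⟨u, hu, he⟩
        rw [mk'_eq_mk, mk'_eq_mk, Projectivization.mk_eq_mk_iff] at he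
        obtain ⟨a, ha⟩ := he
        refine ⟨a, ?_⟩
        have he2 : (⟨(a : ℂ) • w.1, smul_ne_zero a.ne_zero w.2⟩ : {v : V2 // v ≠ 0}) = u :=
          Subtype.ext (by rw [← ha]; rfl)
        rw [he2]
        exact hu
      · rintro ⟨c, hc⟩
        refine ⟨_, hc, ?_⟩
        rw [mk'_eq_mk, mk'_eq_mk]
        exact mk_smul c.ne_zero _ w.2 _
    rw [this]
    exact isOpen_iUnion fun c =>
      hU.preimage (Continuous.subtype_mk (continuous_subtype_val.const_smul (c : ℂ) :
        Continuous fun w : {v : V2 // v ≠ 0} => (c : ℂ) • w.1) _)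
  exact isOpen_coinduced.mpr this

lemma isOpen_offDiag : IsOpen {p : CP1 × CP1 | p.1 ≠ p.2} := by
  rw [isOpen_iff_forall_mem_open]
  rintro ⟨p1, p2⟩ hp
  have h1 := p1.rep_nonzero
  have h2 := p2.rep_nonzero
  have hcross : p1.rep 0 * p2.rep 1 - p1.rep 1 * p2.rep 0 ≠ 0 := by
    intro h
    exact hp (by rw [← p1.mk_rep, ← p2.mk_rep]; exact (mk_eq_iff_cross h1 h2).mpr h)
  have hF : Continuous (fun q : V2 × V2 => q.1 0 * q.2 1 - q.1 1 * q.2 0) := by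
    fun_prop
  have hO : IsOpen {q : V2 × V2 | q.1 0 * q.2 1 - q.1 1 * q.2 0 ≠ 0} :=
    isOpen_compl_iff.mpr (isClosed_eq hF continuous_const)
  obtain ⟨O1, O2, hO1, hO2, hv1, hv2, hsub⟩ :=
    isOpen_prod_iff.mp hO _ _ hcross
  refine ⟨(Projectivization.mk' ℂ '' (Subtype.val ⁻¹' O1)) ×ˢ
      (Projectivization.mk' ℂ '' (Subtype.val ⁻¹' O2)), ?_, ?_, ?_⟩
  · rintro ⟨q1, q2⟩ ⟨⟨u1, hu1, rfl⟩, ⟨u2, hu2, rfl⟩⟩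
    have := hsub (Set.mk_mem_prod hu1 hu2)
    simp only [Set.mem_setOf_eq] at this ⊢
    rw [mk'_eq_mk, mk'_eq_mk]
    intro h
    exact this ((mk_eq_iff_cross u1.2 u2.2).mp h)
  · exact (isOpenMap_mk' _ (hO1.preimage continuous_subtype_val)).prod
      (isOpenMap_mk' _ (hO2.preimage continuous_subtype_val))
  · exact ⟨⟨⟨p1.rep, h1⟩, hv1, p1.mk_rep⟩, ⟨⟨p2.rep, h2⟩, hv2, p2.mk_rep⟩⟩

instance inst_s10 : T2Space CP1 := by
  rw [t2_iff_isClosed_diagonal, ← isOpen_compl_iff]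
  exact isOpen_offDiag

lemma exists_unit_lift (z : CP1) : ∃ (v : V2) (h : v ≠ 0), ‖v‖ = 1 ∧ Projectivization.mk ℂ v h = z := by
  have h0 := z.rep_nonzero
  have hn : ‖z.rep‖ ≠ 0 := norm_ne_zero_iff.mpr h0
  have hc : ((‖z.rep‖ : ℂ))⁻¹ ≠ 0 := by
    simp [hn]
  refine ⟨((‖z.rep‖ : ℂ))⁻¹ • z.rep, smul_ne_zero hc h0, ?_, ?_⟩
  · rw [norm_smul]
    simp [norm_inv, hn]
  · rw [mk_smul hc _ h0]
    exact z.mk_rep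

lemma cp1_tendsto_subseq (x : ℕ → CP1) :
    ∃ (L : CP1) (φ : ℕ → ℕ), StrictMono φ ∧ Tendsto (x ∘ φ) atTop (𝓝 L) := by
  choose v hv hnorm hmk using fun n => exists_unit_lift (x n)
  have hmem : ∀ n, v n ∈ Metric.sphere (0 : V2) 1 := fun n => by
    simpa [mem_sphere_iff_norm] using hnorm n
  obtain ⟨vl, hvl, φ, hφ, htend⟩ := (isCompact_sphere (0 : V2) 1).tendsto_subseq hmem
  have hvl0 : vl ≠ 0 := by
    intro h
    rw [h] at hvl
    simp at hvl
  refine ⟨Projectivization.mk ℂ vl hvl0, φ, hφ, ?_⟩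
  have : Tendsto (fun n => (⟨v (φ n), hv (φ n)⟩ : {v : V2 // v ≠ 0})) atTop (𝓝 ⟨vl, hvl0⟩) :=
    tendsto_subtype_rng.mpr htend
  have h2 := (continuous_mk'.tendsto _).comp this
  refine h2.congr fun n => ?_
  show Projectivization.mk' ℂ _ = x (φ n)
  rw [mk'_eq_mk]
  exact hmk (φ n)
abbrev M2 := Matrix (Fin 2) (Fin 2) ℂ

lemma mulVec_ne_zero (A : SL2C) {v : V2} (hv : v ≠ 0) : (A : M2).mulVec v ≠ 0 := by
  intro h
  apply hv
  have h2 : ((A⁻¹ : SL2C) : M2).mulVec ((A : M2).mulVec v) = 0 := by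
    rw [h]
    simp [Matrix.mulVec_zero]
  rwa [Matrix.mulVec_mulVec, ← Matrix.SpecialLinearGroup.coe_mul, inv_mul_cancel,
    Matrix.SpecialLinearGroup.coe_one, Matrix.one_mulVec] at h2

lemma psl_smul_mk (A : SL2C) (v : V2) (hv : v ≠ 0) :
    (QuotientGroup.mk A : PSL2C) • Projectivization.mk ℂ v hv =
      Projectivization.mk ℂ ((A : M2).mulVec v) (mulVec_ne_zero A hv) := by
  have h1 : (QuotientGroup.mk A : PSL2C) • Projectivization.mk ℂ v hv =
      sl2smul A (Projectivization.mk ℂ v hv) := by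
    show psl2Perm (QuotientGroup.mk A) _ = _
    rfl
  rw [h1, sl2smul_mk]
  apply projmk_congr
  rw [Matrix.SpecialLinearGroup.toLin'_apply, Matrix.toLin'_apply]

lemma continuous_psl_mk : Continuous (QuotientGroup.mk : SL2C → PSL2C) :=
  continuous_quotient_mk'

lemma sl2_tendsto_one {A : ℕ → SL2C} {M : M2} (hdet : M.det = 1)
    (h : Tendsto (fun n => (A n : M2)) atTop (𝓝 M)) :
    Tendsto (fun n => (A n)⁻¹ * A (n + 1)) atTop (𝓝 (1 : SL2C)) := by
  erw [tendsto_subtype_rng]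
  have h1 : Tendsto (fun n => (A (n + 1) : M2)) atTop (𝓝 M) :=
    h.comp (tendsto_add_atTop_nat 1)
  have h2 : Tendsto (fun n => (Matrix.adjugate ((A n : M2))) * (A (n + 1) : M2)) atTop
      (𝓝 (Matrix.adjugate M * M)) :=
    ((continuous_id.matrix_adjugate.tendsto M).comp h).mul h1
  rw [Matrix.adjugate_mul, hdet, one_smul] at h2
  refine h2.congr fun n => ?_
  rw [Matrix.SpecialLinearGroup.coe_mul, Matrix.SpecialLinearGroup.coe_inv]

lemma no_conv (Γ : Subgroup PSL2C) (hdisc : DiscreteTopology Γ) (γ : ℕ → PSL2C)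
    (hmem : ∀ n, γ n ∈ Γ) (hinj : Function.Injective γ) (A : ℕ → SL2C)
    (hA : ∀ n, (QuotientGroup.mk (A n) : PSL2C) = γ n) {M : M2} (hdet : M.det = 1)
    (hlim : Tendsto (fun n => (A n : M2)) atTop (𝓝 M)) : False := by
  obtain ⟨U, hUopen, hUeq⟩ := isOpen_induced_iff.mp (isOpen_discrete ({1} : Set Γ))
  have hone : (1 : PSL2C) ∈ U := by
    have : (⟨1, Γ.one_mem⟩ : Γ) ∈ Subtype.val ⁻¹' U := by rw [hUeq]; rfl
    exact this
  have hU1 : ∀ g, g ∈ Γ → g ∈ U → g = 1 := by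
    intro g hg hgU
    have : (⟨g, hg⟩ : Γ) ∈ Subtype.val ⁻¹' U := hgU
    rw [hUeq] at this
    exact congrArg Subtype.val this
  have htend : Tendsto (fun n => (γ n)⁻¹ * γ (n + 1)) atTop (𝓝 (1 : PSL2C)) := by
    have h1 := (continuous_psl_mk.tendsto _).comp (sl2_tendsto_one hdet hlim)
    have h2 : (QuotientGroup.mk (1 : SL2C) : PSL2C) = 1 := rfl
    rw [h2] at h1
    refine h1.congr fun n => ?_
    show (QuotientGroup.mk ((A n)⁻¹ * A (n + 1)) : PSL2C) = _
    rw [QuotientGroup.mk_mul, QuotientGroup.mk_inv, hA, hA]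
  have hev : ∀ᶠ n in atTop, (γ n)⁻¹ * γ (n + 1) ∈ U := htend (hUopen.mem_nhds hone)
  obtain ⟨n, hn⟩ := hev.exists
  have : γ n = γ (n + 1) := by
    have h1 : (γ n)⁻¹ * γ (n + 1) = 1 :=
      hU1 _ (Γ.mul_mem (Γ.inv_mem (hmem n)) (hmem (n + 1))) hn
    exact inv_mul_eq_one.mp h1
  exact Nat.succ_ne_self n (hinj this).symm
open scoped Matrix
lemma matrix_ne_zero_iff (M : M2) : M ≠ 0 ↔
    M 0 0 ≠ 0 ∨ M 0 1 ≠ 0 ∨ M 1 0 ≠ 0 ∨ M 1 1 ≠ 0 := by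
  constructor
  · intro h
    by_contra hc
    push_neg at hc
    exact h (by ext i j; fin_cases i <;> fin_cases j <;>
      simp [hc.1, hc.2.1, hc.2.2.1, hc.2.2.2])
  · rintro (h | h | h | h) rfl <;> simp at h

lemma mulVec_expand (M : M2) (v : V2) (i : Fin 2) :
    M.mulVec v i = M i 0 * v 0 + M i 1 * v 1 := by
  simp [Matrix.mulVec, dotProduct, Fin.sum_univ_two]

lemma dot_expand (w v : V2) : w ⬝ᵥ v = w 0 * v 0 + w 1 * v 1 := by
  simp [dotProduct, Fin.sum_univ_two]

lemma rank_one {M : M2} (h0 : M ≠ 0) (hdet : M.det = 0) :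
    ∃ u w : V2, u ≠ 0 ∧ w ≠ 0 ∧ ∀ v : V2, M.mulVec v = (w ⬝ᵥ v) • u := by
  rw [Matrix.det_fin_two] at hdet
  rcases (matrix_ne_zero_iff M).mp h0 with h | h | h | h
  · refine ⟨![M 0 0, M 1 0], ![1, M 0 1 / M 0 0], ?_, ?_, fun v => ?_⟩
    · rw [ne_zero_iff_coord]; left; simpa using h
    · rw [ne_zero_iff_coord]; left; simp
    · funext i
      rw [mulVec_expand, dot_expand]
      fin_cases i <;> simp [Pi.smul_apply, smul_eq_mul] <;> field_simp <;> ring_nf <;>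
        linear_combination v 1 * hdet
  · refine ⟨![M 0 1, M 1 1], ![M 0 0 / M 0 1, 1], ?_, ?_, fun v => ?_⟩
    · rw [ne_zero_iff_coord]; left; simpa using h
    · rw [ne_zero_iff_coord]; right; simp
    · funext i
      rw [mulVec_expand, dot_expand]
      fin_cases i <;> simp [Pi.smul_apply, smul_eq_mul] <;> field_simp <;> ring_nf <;>
        linear_combination -v 0 * hdet
  · refine ⟨![M 0 0, M 1 0], ![1, M 1 1 / M 1 0], ?_, ?_, fun v => ?_⟩
    · rw [ne_zero_iff_coord]; right; simpa using h
    · rw [ne_zero_iff_coord]; left; simp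
    · funext i
      rw [mulVec_expand, dot_expand]
      fin_cases i <;> simp [Pi.smul_apply, smul_eq_mul] <;> field_simp <;> ring_nf <;>
        linear_combination -v 1 * hdet
  · refine ⟨![M 0 1, M 1 1], ![M 1 0 / M 1 1, 1], ?_, ?_, fun v => ?_⟩
    · rw [ne_zero_iff_coord]; right; simpa using h
    · rw [ne_zero_iff_coord]; right; simp
    · funext i
      rw [mulVec_expand, dot_expand]
      fin_cases i <;> simp [Pi.smul_apply, smul_eq_mul] <;> field_simp <;> ring_nf <;>
        linear_combination v 0 * hdet
lemma compact_lift {K : Set CP1} (hK : IsCompact K) :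
    ∃ K' : Set V2, IsCompact K' ∧ (∀ v ∈ K', ∃ h : v ≠ 0, Projectivization.mk ℂ v h ∈ K) ∧
      ∀ z ∈ K, ∃ (v : V2) (h : v ≠ 0), v ∈ K' ∧ Projectivization.mk ℂ v h = z := by
  have hT : IsCompact (Subtype.val ⁻¹' Metric.sphere (0 : V2) 1 : Set {v : V2 // v ≠ 0}) := by
    rw [Topology.IsEmbedding.subtypeVal.isCompact_iff]
    have : Subtype.val '' (Subtype.val ⁻¹' Metric.sphere (0 : V2) 1 : Set {v : V2 // v ≠ 0}) =
        Metric.sphere (0 : V2) 1 := by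
      apply Set.image_preimage_eq_of_subset
      rintro v hv
      have : v ≠ 0 := by
        intro h
        rw [Metric.mem_sphere, h] at hv
        simp at hv
      exact ⟨⟨v, this⟩, rfl⟩
    rw [this]
    exact isCompact_sphere 0 1
  have hclosed : IsClosed (Projectivization.mk' ℂ ⁻¹' K : Set {v : V2 // v ≠ 0}) :=
    hK.isClosed.preimage continuous_mk'
  have hS : IsCompact ((Projectivization.mk' ℂ ⁻¹' K) ∩
      (Subtype.val ⁻¹' Metric.sphere (0 : V2) 1) : Set {v : V2 // v ≠ 0}) :=
    hT.inter_left hclosed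
  refine ⟨Subtype.val '' ((Projectivization.mk' ℂ ⁻¹' K) ∩
      (Subtype.val ⁻¹' Metric.sphere (0 : V2) 1)), hS.image continuous_subtype_val, ?_, ?_⟩
  · rintro v ⟨⟨v', hv'⟩, ⟨hmem, _⟩, rfl⟩
    exact ⟨hv', hmem⟩
  · intro z hz
    obtain ⟨v, h, hnorm, hmk⟩ := exists_unit_lift z
    refine ⟨v, h, ⟨⟨v, h⟩, ⟨?_, ?_⟩, rfl⟩, hmk⟩
    · show Projectivization.mk' ℂ _ ∈ K
      rw [mk'_eq_mk, hmk]
      exact hz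
    · simpa [Metric.mem_sphere, dist_zero_right] using hnorm

lemma core (Γ : Subgroup PSL2C) (hdisc : DiscreteTopology Γ) (γ : ℕ → PSL2C)
    (hmem : ∀ n, γ n ∈ Γ) (hinj : Function.Injective γ) :
    ∃ (φ : ℕ → ℕ) (a b : CP1), StrictMono φ ∧ TendstoConstUniformlyAway (γ ∘ φ) b a := by
  classical
  set A : ℕ → SL2C := fun n => (γ n).out with hAdef
  have hA : ∀ n, (QuotientGroup.mk (A n) : PSL2C) = γ n := fun n => QuotientGroup.out_eq' (γ n)
  set fM : M2 → (Fin 2 → Fin 2 → ℂ) := fun M i j => M i j with hfM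
  have hfMcont : Continuous fM := continuous_id
  set r : ℕ → ℝ := fun n => ‖fM (A n : M2)‖ with hr
  have hA0 : ∀ n, (A n : M2) ≠ 0 := by
    intro n h
    have := (A n).prop
    rw [h] at this
    simp at this
  have hrpos : ∀ n, 0 < r n := by
    intro n
    rw [hr]
    refine norm_pos_iff.mpr ?_
    intro h
    apply hA0 n
    ext i j
    exact congrFun (congrFun h i) j
  -- escape to infinity
  have hresc : Tendsto r atTop atTop := by
    by_contra hcon
    rw [tendsto_atTop] at hcon
    push_neg at hcon
    obtain ⟨C, hC⟩ := hcon
    obtain ⟨φ0, hφ0, hφ0C⟩ := extraction_of_frequently_atTop hC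
    have hball : ∀ n, fM (A (φ0 n) : M2) ∈ Metric.closedBall (0 : Fin 2 → Fin 2 → ℂ) C := by
      intro n
      rw [Metric.mem_closedBall, dist_zero_right]
      exact le_of_lt (hφ0C n)
    obtain ⟨Ml, _, ψ, hψ, htend⟩ :=
      (isCompact_closedBall (0 : Fin 2 → Fin 2 → ℂ) C).tendsto_subseq hball
    set Mlm : M2 := Matrix.of Ml with hMlm
    have htendM : Tendsto (fun n => ((A (φ0 (ψ n))) : M2)) atTop (𝓝 Mlm) := htend
    have hdet : Mlm.det = 1 := by
      have h1 : Tendsto (fun n => ((A (φ0 (ψ n))) : M2).det) atTop (𝓝 Mlm.det) :=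
        (continuous_id.matrix_det.tendsto _).comp htendM
      have h2 : (fun n => ((A (φ0 (ψ n))) : M2).det) = fun _ => (1 : ℂ) :=
        funext fun n => (A _).prop
      rw [h2] at h1
      exact (tendsto_nhds_unique tendsto_const_nhds h1).symm
    exact no_conv Γ hdisc (γ ∘ (φ0 ∘ ψ)) (fun n => hmem _)
      (hinj.comp (hφ0.comp hψ).injective) (A ∘ (φ0 ∘ ψ)) (fun n => hA _) hdet htendM
  -- normalize
  set c : ℕ → ℂ := fun n => ((r n : ℝ) : ℂ)⁻¹ with hc
  have hc0 : ∀ n, c n ≠ 0 := by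
    intro n
    simp [hc, Complex.ofReal_ne_zero, ne_of_gt (hrpos n)]
  set B : ℕ → (Fin 2 → Fin 2 → ℂ) := fun n => c n • fM (A n : M2) with hB
  have hBsphere : ∀ n, B n ∈ Metric.sphere (0 : Fin 2 → Fin 2 → ℂ) 1 := by
    intro n
    rw [Metric.mem_sphere, dist_zero_right, hB]
    simp only [norm_smul, hc]
    rw [norm_inv, Complex.norm_real, Real.norm_eq_abs, abs_of_pos (hrpos n)]
    exact inv_mul_cancel₀ (ne_of_gt (hrpos n))
  obtain ⟨Bl, hBlmem, φ, hφ, htB⟩ := (isCompact_sphere (0 : Fin 2 → Fin 2 → ℂ) 1).tendsto_subseq hBsphere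
  set Blm : M2 := Matrix.of Bl with hBlm
  set C2 : ℕ → M2 := fun n => c n • (A n : M2) with hC2
  have htBm : Tendsto (fun n => C2 (φ n)) atTop (𝓝 Blm) := htB
  have hBl0 : Blm ≠ 0 := by
    intro h
    have : Bl = 0 := by
      ext i j
      exact congrFun (congrFun h i) j
    rw [this] at hBlmem
    simp at hBlmem
  have hctend : Tendsto (fun n => c (φ n)) atTop (𝓝 0) := by
    have h1 : Tendsto (fun n => r (φ n)) atTop atTop := hresc.comp hφ.tendsto_atTop
    have h2 : Tendsto (fun n => (r (φ n))⁻¹) atTop (𝓝 0) := h1.inv_tendsto_atTop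
    rw [tendsto_zero_iff_norm_tendsto_zero]
    refine h2.congr fun n => ?_
    rw [hc]
    rw [norm_inv, Complex.norm_real, Real.norm_eq_abs, abs_of_pos (hrpos _)]
  have hdet0 : Blm.det = 0 := by
    have h1 : Tendsto (fun n => (C2 (φ n)).det) atTop (𝓝 Blm.det) :=
      (continuous_id.matrix_det.tendsto _).comp htBm
    have h2 : ∀ n, (C2 (φ n)).det = (c (φ n)) ^ 2 := by
      intro n
      rw [hC2]
      simp only [Matrix.det_smul, (A _).prop, mul_one]
      norm_num
    have h3 : Tendsto (fun n => (c (φ n)) ^ 2) atTop (𝓝 0) := by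
      simpa using hctend.pow 2
    rw [funext h2] at h1
    exact tendsto_nhds_unique h1 h3
  obtain ⟨u, w, hu, hw, hmv⟩ := rank_one hBl0 hdet0
  have hwperp : (![w 1, -w 0] : V2) ≠ 0 := by
    rw [ne_zero_iff_coord]
    rcases (ne_zero_iff_coord w).mp hw with h | h
    · right; simpa using h
    · left; simpa using h
  set b : CP1 := Projectivization.mk ℂ ![w 1, -w 0] hwperp with hbdef
  set a : CP1 := Projectivization.mk ℂ u hu with hadef
  have hdotiff : ∀ (v : V2) (hv : v ≠ 0), Projectivization.mk ℂ v hv = b ↔ w ⬝ᵥ v = 0 := by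
    intro v hv
    rw [hbdef, mk_eq_iff_cross hv hwperp, dot_expand]
    constructor <;> intro h <;> [skip; skip] <;> · simp at h ⊢; linear_combination -h
  refine ⟨φ, a, b, hφ, ?_⟩
  intro U hU K hKcomp hbK
  obtain ⟨U', hU'sub, hU'open, haU'⟩ := mem_nhds_iff.mp hU
  obtain ⟨K', hK'comp, hK'prop, hK'surj⟩ := compact_lift hKcomp
  set N : Set (M2 × V2) := {p | ∃ h : p.1.mulVec p.2 ≠ 0, Projectivization.mk ℂ _ h ∈ U'}
    with hNdef
  have hmvcont : Continuous fun p : M2 × V2 => p.1.mulVec p.2 :=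
    continuous_fst.matrix_mulVec continuous_snd
  have hDopen : IsOpen {p : M2 × V2 | p.1.mulVec p.2 ≠ 0} :=
    isOpen_compl_iff.mpr (isClosed_eq hmvcont continuous_const)
  have hNopen : IsOpen N := by
    have hΦ : Continuous fun q : {p : M2 × V2 // p.1.mulVec p.2 ≠ 0} =>
        Projectivization.mk' ℂ ⟨q.1.1.mulVec q.1.2, q.2⟩ :=
      continuous_mk'.comp ((hmvcont.comp continuous_subtype_val).subtype_mk _)
    have heq : N = Subtype.val ''
        ((fun q : {p : M2 × V2 // p.1.mulVec p.2 ≠ 0} =>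
          Projectivization.mk' ℂ ⟨q.1.1.mulVec q.1.2, q.2⟩) ⁻¹' U') := by
      ext p
      constructor
      · rintro ⟨h, hmem⟩
        exact ⟨⟨p, h⟩, hmem, rfl⟩
      · rintro ⟨q, hq, rfl⟩
        exact ⟨q.2, hq⟩
    rw [heq]
    exact hDopen.isOpenMap_subtype_val _ (hU'open.preimage hΦ)
  have hsubN : ({Blm} : Set M2) ×ˢ K' ⊆ N := by
    rintro ⟨m, v⟩ ⟨hm, hv⟩
    simp only [Set.mem_singleton_iff] at hm
    subst hm
    obtain ⟨hvne, hvK⟩ := hK'prop v hv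
    have hwv : w ⬝ᵥ v ≠ 0 := by
      intro h
      exact hbK (((hdotiff v hvne).mpr h) ▸ hvK)
    have hne : Blm.mulVec v ≠ 0 := by
      rw [hmv v]
      exact smul_ne_zero hwv hu
    refine ⟨hne, ?_⟩
    have heqa : Projectivization.mk ℂ (Blm.mulVec v) hne = a :=
      (projmk_congr hne (hmv v)).trans (mk_smul hwv u hu _)
    exact Set.mem_of_eq_of_mem heqa haU'
  obtain ⟨O1, O2, hO1, hO2, hBl1, hK2, hsub2⟩ :=
    generalized_tube_lemma isCompact_singleton hK'comp hNopen hsubN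
  have hev : ∀ᶠ n in atTop, C2 (φ n) ∈ O1 := htBm (hO1.mem_nhds (hBl1 rfl))
  filter_upwards [hev] with n hn z hz
  obtain ⟨v, h, hvK', hmkz⟩ := hK'surj z hz
  have hmemN : (C2 (φ n), v) ∈ N := hsub2 ⟨hn, hK2 hvK'⟩
  obtain ⟨hne, hmemU'⟩ := hmemN
  have h1 : (C2 (φ n)).mulVec v = c (φ n) • ((A (φ n) : M2)).mulVec v :=
    Matrix.smul_mulVec _ _ _
  have h2 : Projectivization.mk ℂ ((C2 (φ n)).mulVec v) hne
      = Projectivization.mk ℂ ((A (φ n) : M2).mulVec v) (mulVec_ne_zero _ h) :=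
    (projmk_congr hne h1).trans (mk_smul (hc0 (φ n)) _ (mulVec_ne_zero _ h) _)
  have h3 : (γ ∘ φ) n • z = Projectivization.mk ℂ ((A (φ n) : M2).mulVec v)
      (mulVec_ne_zero _ h) := by
    show γ (φ n) • z = _
    rw [← hmkz, ← hA (φ n), psl_smul_mk]
  exact Set.mem_of_eq_of_mem (h3.trans h2.symm) (hU'sub hmemU')
lemma tcua_pointwise {γ : ℕ → PSL2C} {q p : CP1} (h : TendstoConstUniformlyAway γ q p)
    {y : CP1} (hy : y ≠ q) : Tendsto (fun n => γ n • y) atTop (𝓝 p) := by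
  rw [tendsto_def]
  intro s hs
  have := h s hs {y} isCompact_singleton (fun hq => hy ((Set.mem_singleton_iff.mp hq).symm))
  exact this.mono fun n hn => hn y rfl

lemma exists_ne_ne (x b : CP1) : ∃ y : CP1, y ≠ x ∧ y ≠ b := by
  have h10 : (![1, 0] : V2) ≠ 0 := by rw [ne_zero_iff_coord]; left; simp
  have h01 : (![0, 1] : V2) ≠ 0 := by rw [ne_zero_iff_coord]; right; simp
  have h11 : (![1, 1] : V2) ≠ 0 := by rw [ne_zero_iff_coord]; left; simp
  set p0 := Projectivization.mk ℂ ![1, 0] h10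
  set p1 := Projectivization.mk ℂ ![0, 1] h01
  set p2 := Projectivization.mk ℂ ![1, 1] h11
  have d01 : p0 ≠ p1 := fun hc => by have := (mk_eq_iff_cross h10 h01).mp hc; simp at this
  have d02 : p0 ≠ p2 := fun hc => by have := (mk_eq_iff_cross h10 h11).mp hc; simp at this
  have d12 : p1 ≠ p2 := fun hc => by have := (mk_eq_iff_cross h01 h11).mp hc; simp at this
  by_contra hcon
  push_neg at hcon
  have e0 : p0 = x ∨ p0 = b := by
    by_cases hx : p0 = x
    · exact Or.inl hx
    · exact Or.inr (hcon p0 hx)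
  have e1 : p1 = x ∨ p1 = b := by
    by_cases hx : p1 = x
    · exact Or.inl hx
    · exact Or.inr (hcon p1 hx)
  have e2 : p2 = x ∨ p2 = b := by
    by_cases hx : p2 = x
    · exact Or.inl hx
    · exact Or.inr (hcon p2 hx)
  rcases e0 with h|h <;> rcases e1 with h'|h' <;> rcases e2 with h''|h'' <;>
    first
      | exact d01 (h.trans h'.symm)
      | exact d02 (h.trans h''.symm)
      | exact d12 (h'.trans h''.symm)

lemma inj_subseq {α : Type*} (γ : ℕ → α) (hinf : (Set.range γ).Infinite) :
    ∃ φ : ℕ → ℕ, StrictMono φ ∧ Function.Injective (γ ∘ φ) := by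
  classical
  set p : ℕ → Prop := fun n => ∀ m, m < n → γ m ≠ γ n with hp
  have hpre : ∀ v : Set.range γ, ∃ n, γ n = v := fun v => v.2
  set f : Set.range γ → ℕ := fun v => Nat.find (hpre v) with hf
  have hfval : ∀ v, γ (f v) = v := fun v => Nat.find_spec (hpre v)
  have hfinj : Function.Injective f := by
    intro v1 v2 h
    have := hfval v1
    rw [h, hfval v2] at this
    exact Subtype.ext this.symm
  have hrange : Set.range f ⊆ setOf p := by
    rintro n ⟨v, rfl⟩ m hm he
    rw [hfval v] at he
    exact Nat.find_min (hpre v) hm he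
  have hSinf : (setOf p).Infinite := by
    have : Infinite (Set.range γ) := hinf.to_subtype
    exact (Set.infinite_range_of_injective hfinj).mono hrange
  refine ⟨Nat.nth p, Nat.nth_strictMono hSinf, ?_⟩
  intro m n h
  by_contra hne
  rcases lt_trichotomy m n with hlt | heq | hlt
  · exact Nat.nth_mem_of_infinite hSinf n _ ((Nat.nth_strictMono hSinf) hlt) h
  · exact hne heq
  · exact Nat.nth_mem_of_infinite hSinf m _ ((Nat.nth_strictMono hSinf) hlt) h.symm

lemma range_infinite {γ : ℕ → PSL2C} {x xm : CP1}
    (hunif : TendstoConstUniformlyAway γ x xm) : (Set.range γ).Infinite := by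
  classical
  by_contra hfin
  rw [Set.not_infinite] at hfin
  have hfinsub : Finite (Set.range γ) := hfin.to_subtype
  obtain ⟨g, hg⟩ := Finite.exists_infinite_fiber (Set.rangeFactorization γ)
  have hfreq : ∃ᶠ n in atTop, γ n = (g : PSL2C) := by
    rw [Nat.frequently_atTop_iff_infinite]
    have h1 : (Set.rangeFactorization γ ⁻¹' {g}).Infinite := Set.infinite_coe_iff.mp hg
    refine h1.mono ?_
    intro n hn
    have : Set.rangeFactorization γ n = g := hn
    exact congrArg Subtype.val this
  have key : ∀ y, y ≠ x → (g : PSL2C) • y = xm := by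
    intro y hy
    have ht := tcua_pointwise hunif hy
    have hf2 : ∃ᶠ n in atTop, γ n • y ∈ ({(g : PSL2C) • y} : Set CP1) :=
      hfreq.mono fun n hn => by rw [hn]; rfl
    have hmem := mem_closure_of_frequently_of_tendsto hf2 ht
    rw [isClosed_singleton.closure_eq, Set.mem_singleton_iff] at hmem
    exact hmem.symm
  obtain ⟨y1, hy1x, _⟩ := exists_ne_ne x x
  obtain ⟨y2, hy2x, hy21⟩ := exists_ne_ne x y1
  have k1 := key y1 hy1x
  have k2 := key y2 hy2x
  exact hy21 (MulAction.injective (g : PSL2C) (k2.trans k1.symm))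

/-- The two sphere-at-infinity characterizations of a conical limit point of a discrete
subgroup of `PSL(2,ℂ)` agree. -/
theorem conicalLimitPoint_characterizations
    (Γ : Subgroup PSL2C) (hdisc : DiscreteTopology Γ) (x : CP1) :
    (∃ (γ : ℕ → PSL2C) (xp xm : CP1), (∀ m, γ m ∈ Γ) ∧ xp ≠ xm ∧
        Filter.Tendsto (fun m => γ m • x) Filter.atTop (nhds xp) ∧
        TendstoConstUniformlyAway γ x xm) ↔
      (∃ γ : ℕ → PSL2C, (∀ n, γ n ∈ Γ) ∧ Function.Injective γ ∧
        ∀ y : CP1, y ≠ x →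
          Disjoint (closure {p : CP1 × CP1 | ∃ n, p = (γ n • x, γ n • y)})
            (Set.diagonal CP1)) := by
  constructor
  · rintro ⟨γ, xp, xm, hmem, hne, htx, hunif⟩
    obtain ⟨φ, hφ, hinj⟩ := inj_subseq γ (range_infinite hunif)
    refine ⟨γ ∘ φ, fun n => hmem _, hinj, ?_⟩
    intro y hy
    set f : ℕ → CP1 × CP1 := fun n => ((γ ∘ φ) n • x, (γ ∘ φ) n • y) with hfdef
    have htp : Tendsto f atTop (𝓝 (xp, xm)) :=
      (htx.comp hφ.tendsto_atTop).prodMk_nhds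
        ((tcua_pointwise hunif hy).comp hφ.tendsto_atTop)
    have hseteq : {p : CP1 × CP1 | ∃ n, p = ((γ ∘ φ) n • x, (γ ∘ φ) n • y)} = Set.range f := by
      ext p
      simp [hfdef, eq_comm]
    have hclosure : closure {p : CP1 × CP1 | ∃ n, p = ((γ ∘ φ) n • x, (γ ∘ φ) n • y)} ⊆
        insert (xp, xm) (Set.range f) := by
      rw [hseteq]
      exact closure_minimal (Set.subset_insert _ _) htp.isCompact_insert_range.isClosed
    rw [Set.disjoint_left]
    intro p hp hpd
    have hpd' : p.1 = p.2 := hpd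
    rcases hclosure hp with h | ⟨n, rfl⟩
    · subst h
      exact hne hpd'
    · exact hy (MulAction.injective ((γ ∘ φ) n) hpd'.symm)
  · rintro ⟨γ, hmem, hinj, hcl⟩
    obtain ⟨φ, a, b, hφ, hunif⟩ := core Γ hdisc γ hmem hinj
    obtain ⟨xp, ψ, hψ, htxp⟩ := cp1_tendsto_subseq (fun n => (γ ∘ φ) n • x)
    have hpt : ∀ y, y ≠ b → Tendsto (fun n => (γ ∘ φ) n • y) atTop (𝓝 a) :=
      fun y hy => tcua_pointwise hunif hy
    have hdiag : ∀ y, y ≠ x → (a, a) ∉ closure {p : CP1 × CP1 | ∃ n, p = (γ n • x, γ n • y)} :=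
      fun y hy hmemc =>
        absurd (rfl : a = a) (fun _ => Set.disjoint_left.mp (hcl y hy) hmemc rfl)
    have hxb : x = b := by
      by_contra hxb
      obtain ⟨y, hyx, hyb⟩ := exists_ne_ne x b
      have h1 : Tendsto (fun n => ((γ ∘ φ) n • x, (γ ∘ φ) n • y)) atTop (𝓝 (a, a)) :=
        (hpt x hxb).prodMk_nhds (hpt y hyb)
      exact hdiag y hyx
        (mem_closure_of_tendsto h1 (Eventually.of_forall fun n => ⟨φ n, rfl⟩))
    subst hxb
    have hxpa : xp ≠ a := by
      intro he
      obtain ⟨y, hyx, _⟩ := exists_ne_ne x x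
      have h1 : Tendsto (fun n => ((γ ∘ φ ∘ ψ) n • x, (γ ∘ φ ∘ ψ) n • y)) atTop (𝓝 (xp, a)) :=
        htxp.prodMk_nhds ((hpt y hyx).comp hψ.tendsto_atTop)
      rw [he] at h1
      exact hdiag y hyx
        (mem_closure_of_tendsto h1 (Eventually.of_forall fun n => ⟨φ (ψ n), rfl⟩))
    refine ⟨γ ∘ (φ ∘ ψ), xp, a, fun n => hmem _, hxpa, htxp, ?_⟩
    intro U hU K hK hxK
    exact hψ.tendsto_atTop.eventually (hunif U hU K hK hxK)
end
end
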